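/- Let λ₁ > 0, λ₂ > 0, α > 0 and θ ∈ [-1, 1], let D = λ₂α/(λ₁+λ₂α) + θλ₁·(2/(2λ₁+λ₂α) + 1/(λ₁+2λ₂α) - 2/(λ₁+λ₂α)) and K = λ₁/D, and for z, y > 0 let f_{Z,Y}(z,y) = λ₁λ₂ z e^{-(λ₁+λ₂y)z}(1 + θ(1 - 2e^{-λ₁z})(1 - 2e^{-λ₂yz})). Then for every x > 0, (∫₀^α f_{Z,Y}(x,y) dy) / D = K e^{-λ₁x}(1 - e^{-λ₂αx})(1 - θe^{-λ₂αx}(1 - 2e^{-λ₁x})); that is, the density of Z conditional on Y ≤ α equals the GWED density f^w. -/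

import Mathlib

open MeasureTheory Real

theorem gwed_hidden_truncation_density
    (l₁ l₂ α θ : ℝ) (hl₁ : 0 < l₁) (hl₂ : 0 < l₂) (hα : 0 < α)
    (hθ : θ ∈ Set.Icc (-1 : ℝ) 1)
    (D K : ℝ)
    (hD : D = l₂ * α / (l₁ + l₂ * α)
        + θ * l₁ * (2 / (2 * l₁ + l₂ * α) + 1 / (l₁ + 2 * l₂ * α)
          - 2 / (l₁ + l₂ * α)))
    (hK : K = l₁ / D)
    (f : ℝ → ℝ → ℝ)
    (hf : ∀ z y : ℝ, 0 < z → 0 < y →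
      f z y = l₁ * l₂ * z * Real.exp (-(l₁ + l₂ * y) * z)
        * (1 + θ * (1 - 2 * Real.exp (-l₁ * z)) * (1 - 2 * Real.exp (-l₂ * y * z)))) :
    ∀ x : ℝ, 0 < x →
      (∫ y in (0 : ℝ)..α, f x y) / D
        = K * Real.exp (-l₁ * x) * (1 - Real.exp (-l₂ * α * x))
          * (1 - θ * Real.exp (-l₂ * α * x) * (1 - 2 * Real.exp (-l₁ * x))) := by
  intro x hx
  set c : ℝ := l₂ * x with hc
  set a : ℝ := Real.exp (-l₁ * x) with ha
  set A : ℝ := 1 + θ * (1 - 2 * a) with hA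
  set B : ℝ := θ * (1 - 2 * a) with hB
  -- the explicit integrand
  set g : ℝ → ℝ := fun y => l₁ * c * a * (A * Real.exp (-c * y)
      - 2 * B * Real.exp (-(2 * c) * y)) with hg
  -- the antiderivative
  set F : ℝ → ℝ := fun y => l₁ * a * (-A * Real.exp (-c * y)
      + B * Real.exp (-(2 * c) * y)) with hF
  have hderiv : ∀ y : ℝ, HasDerivAt F (g y) y := by
    intro y
    have h1 : HasDerivAt (fun y : ℝ => Real.exp (-c * y))
        (Real.exp (-c * y) * (-c * 1)) y :=
      (Real.hasDerivAt_exp (-c * y)).comp y ((hasDerivAt_id y).const_mul (-c))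
    have h2 : HasDerivAt (fun y : ℝ => Real.exp (-(2 * c) * y))
        (Real.exp (-(2 * c) * y) * (-(2 * c) * 1)) y :=
      (Real.hasDerivAt_exp (-(2 * c) * y)).comp y ((hasDerivAt_id y).const_mul (-(2 * c)))
    have h3 := ((h1.const_mul (-A)).add (h2.const_mul B)).const_mul (l₁ * a)
    refine (h3.congr_deriv ?_).congr_of_eventuallyEq (Filter.Eventually.of_forall fun z => rfl)
    simp [hg]
    ring
  have hcont : Continuous g := by
    rw [hg]; fun_prop
  have hint : (∫ y in (0:ℝ)..α, g y) = F α - F 0 :=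
    intervalIntegral.integral_eq_sub_of_hasDerivAt (fun y _ => hderiv y)
      (hcont.intervalIntegrable 0 α)
  have hfg : (∫ y in (0:ℝ)..α, f x y) = ∫ y in (0:ℝ)..α, g y := by
    apply intervalIntegral.integral_congr_ae
    filter_upwards with y hy
    rw [Set.uIoc_of_le hα.le] at hy
    rw [hf x y hx hy.1]
    simp only [hg]
    have e1 : (-(l₁ + l₂ * y) * x) = (-l₁ * x) + (-c * y) := by rw [hc]; ring
    have e2 : (-l₂ * y * x) = -c * y := by rw [hc]; ring
    have e3 : (-(2 * c) * y) = (-c * y) + (-c * y) := by ring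
    rw [e1, e2, e3, Real.exp_add, Real.exp_add, ← ha]
    ring
  have hb : Real.exp (-l₂ * α * x) = Real.exp (-c * α) := by
    rw [hc]; ring_nf
  have hb2 : Real.exp (-(2 * c) * α) = Real.exp (-c * α) * Real.exp (-c * α) := by
    rw [← Real.exp_add]; ring_nf
  rw [hfg, hint, hK, hF, hb]
  simp only
  rw [hb2, show -c * (0:ℝ) = 0 by ring, show -(2*c) * (0:ℝ) = 0 by ring, Real.exp_zero,
    hA, hB, ha]
  ring
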